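/- arXiv:2508.11112 — 3 statements merged into one kernel-verified Lean document; each statement's English description precedes it below -/
import Mathlib

section
/- Let E be a finite-dimensional real inner product space. Let f : E → ℝ be differentiable with gradient ∇f that is Lipschitz with constant L > 0, let Ψ : E → ℝ be any function, let λ ≥ 0, set F_λ = f + λΨ, and fix η with 0 < η ≤ 1/(2L). Let (x^t)_{t≥0} be a sequence such that for every t, x^{t+1} is a global minimizer of z ↦ ηλΨ(z) + (1/2)‖z − (x^t − η∇f(x^t))‖². Suppose F_λ is bounded below by F* ∈ ℝ. Then for every T ≥ 1, Σ_{t=0}^{T−1} ‖x^{t+1} − x^t‖² ≤ 4η (F_λ(x^0) − F*); in particular, ‖x^{t+1} − x^t‖ → 0 as t → ∞. -/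
open InnerProductSpace

lemma descent_lemma
    {E : Type*} [NormedAddCommGroup E] [InnerProductSpace ℝ E] [CompleteSpace E]
    (f : E → ℝ) (f' : E → E) (hf : ∀ x, HasGradientAt f (f' x) x)
    (L : ℝ) (hL : 0 ≤ L) (hlip : ∀ x y, ‖f' x - f' y‖ ≤ L * ‖x - y‖)
    (x y : E) :
    f y ≤ f x + inner ℝ (f' x) (y - x) + L / 2 * ‖y - x‖ ^ 2 := by
  set d := y - x with hd
  set φ : ℝ → ℝ := fun t => f (x + t • d) - t * inner ℝ (f' x) d - L * t ^ 2 / 2 * ‖d‖ ^ 2 with hφ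
  have hderiv : ∀ t : ℝ, HasDerivAt φ
      ((inner ℝ (f' (x + t • d)) d : ℝ) - inner ℝ (f' x) d - L * t * ‖d‖ ^ 2) t := by
    intro t
    have hc : HasDerivAt (fun t : ℝ => x + t • d) d t := by
      simpa using ((hasDerivAt_id t).smul_const d).const_add x
    have h1 : HasDerivAt (fun t : ℝ => f (x + t • d)) (inner ℝ (f' (x + t • d)) d : ℝ) t :=
      by have h := (hf (x + t • d)).hasFDerivAt.comp_hasDerivAt t hc; exact h
    have h2 : HasDerivAt (fun t : ℝ => t * inner ℝ (f' x) d) (inner ℝ (f' x) d : ℝ) t := by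
      simpa using (hasDerivAt_id t).mul_const (inner ℝ (f' x) d : ℝ)
    have h3 : HasDerivAt (fun t : ℝ => L * t ^ 2 / 2 * ‖d‖ ^ 2) (L * t * ‖d‖ ^ 2) t := by
      have := ((hasDerivAt_pow 2 t).const_mul L).div_const 2
      have := this.mul_const (‖d‖ ^ 2)
      refine this.congr_deriv ?_
      push_cast
      ring
    exact (h1.sub h2).sub h3
  have hmono : φ 1 ≤ φ 0 := by
    have : AntitoneOn φ (Set.Icc 0 1) := by
      apply antitoneOn_of_deriv_nonpos (convex_Icc 0 1)
      · exact fun t _ => (hderiv t).continuousAt.continuousWithinAt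
      · intro t ht
        exact ((hderiv t).differentiableAt).differentiableWithinAt
      · intro t ht
        rw [interior_Icc] at ht
        rw [(hderiv t).deriv]
        have hcs : (inner ℝ (f' (x + t • d)) d : ℝ) - inner ℝ (f' x) d ≤ L * t * ‖d‖ ^ 2 := by
          have h1 : (inner ℝ (f' (x + t • d)) d : ℝ) - inner ℝ (f' x) d
              = inner ℝ (f' (x + t • d) - f' x) d := by rw [inner_sub_left]
          rw [h1]
          calc (inner ℝ (f' (x + t • d) - f' x) d : ℝ)
              ≤ ‖f' (x + t • d) - f' x‖ * ‖d‖ := real_inner_le_norm _ _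
            _ ≤ L * ‖x + t • d - x‖ * ‖d‖ := by
                have := hlip (x + t • d) x
                have hdn : (0:ℝ) ≤ ‖d‖ := norm_nonneg _
                nlinarith [this, norm_nonneg (f' (x + t • d) - f' x)]
            _ = L * (t * ‖d‖) * ‖d‖ := by
                rw [add_sub_cancel_left, norm_smul, Real.norm_eq_abs,
                  abs_of_pos ht.1]
            _ = L * t * ‖d‖ ^ 2 := by ring
        linarith
    exact this (by simp) (by simp) zero_le_one
  have h0 : φ 0 = f x := by simp [hφ]
  have h1 : φ 1 = f y - inner ℝ (f' x) d - L / 2 * ‖d‖ ^ 2 := by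
    simp only [hφ, one_smul, one_pow, mul_one, one_mul, hd, add_sub_cancel]
  rw [h0, h1] at hmono
  linarith

/-- Telescoped sufficient decrease for the proximal gradient method
(proof of Theorem 3.1): the squared successive differences are summable-bounded by
`4η (F_λ(x⁰) − F*)`, and in particular `‖x^{t+1} − x^t‖ → 0`. -/
theorem prox_grad_successive_differences
    {E : Type*} [NormedAddCommGroup E] [InnerProductSpace ℝ E] [FiniteDimensional ℝ E]
    (f : E → ℝ) (f' : E → E) (hf : ∀ x, HasGradientAt f (f' x) x)
    (L : ℝ) (hL : 0 < L) (hlip : ∀ x y, ‖f' x - f' y‖ ≤ L * ‖x - y‖)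
    (Ψ : E → ℝ) (lam : ℝ) (hlam : 0 ≤ lam)
    (η : ℝ) (hη0 : 0 < η) (hη : η ≤ 1 / (2 * L))
    (x : ℕ → E)
    (hprox : ∀ t : ℕ, ∀ z : E,
      η * lam * Ψ (x (t + 1)) + (1 / 2) * ‖x (t + 1) - (x t - η • f' (x t))‖ ^ 2 ≤
        η * lam * Ψ z + (1 / 2) * ‖z - (x t - η • f' (x t))‖ ^ 2)
    (Fstar : ℝ) (hbdd : ∀ y : E, Fstar ≤ f y + lam * Ψ y) :
    (∀ T : ℕ, 1 ≤ T →
      ∑ t ∈ Finset.range T, ‖x (t + 1) - x t‖ ^ 2 ≤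
        4 * η * ((f (x 0) + lam * Ψ (x 0)) - Fstar)) ∧
      Filter.Tendsto (fun t : ℕ => ‖x (t + 1) - x t‖) Filter.atTop (nhds 0) := by
  set F : ℕ → ℝ := fun t => f (x t) + lam * Ψ (x t) with hF
  have hηL : η * L ≤ 1 / 2 := by
    have h2L : (0:ℝ) < 2 * L := by linarith
    have := (le_div_iff₀ h2L).mp hη
    nlinarith
  -- per-step sufficient decrease
  have key : ∀ t : ℕ, ‖x (t + 1) - x t‖ ^ 2 ≤ 4 * η * (F t - F (t + 1)) := by
    intro t
    set d := x (t + 1) - x t with hd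
    set g := f' (x t) with hg
    have hp := hprox t (x t)
    have e1 : x (t + 1) - (x t - η • g) = d + η • g := by rw [hd]; abel
    have e2 : x t - (x t - η • g) = η • g := by abel
    rw [e1, e2] at hp
    have e3 : ‖d + η • g‖ ^ 2 = ‖d‖ ^ 2 + 2 * (η * inner ℝ d g) + ‖η • g‖ ^ 2 := by
      rw [norm_add_sq_real, real_inner_smul_right]
    rw [e3] at hp
    -- hp : ηλΨ(x(t+1)) + ½‖d‖² + η⟪d,g⟫ ≤ ηλΨ(x t)  (after simplification)
    have hdesc := descent_lemma f f' hf L hL.le hlip (x t) (x (t + 1))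
    rw [← hd, ← hg] at hdesc
    have hsym : (inner ℝ g d : ℝ) = inner ℝ d g := real_inner_comm _ _
    rw [hsym] at hdesc
    -- multiply descent by η and add
    have hLd : η * (L / 2 * ‖d‖ ^ 2) ≤ 1 / 4 * ‖d‖ ^ 2 := by
      nlinarith [sq_nonneg ‖d‖]
    have hηdesc := mul_le_mul_of_nonneg_left hdesc hη0.le
    simp only [hF]
    nlinarith [hp, hηdesc, hLd]
  have hFbdd : ∀ t, Fstar ≤ F t := fun t => hbdd (x t)
  have hsum : ∀ T : ℕ, ∑ t ∈ Finset.range T, ‖x (t + 1) - x t‖ ^ 2 ≤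
      4 * η * (F 0 - Fstar) := by
    intro T
    calc ∑ t ∈ Finset.range T, ‖x (t + 1) - x t‖ ^ 2
        ≤ ∑ t ∈ Finset.range T, 4 * η * (F t - F (t + 1)) :=
          Finset.sum_le_sum fun t _ => key t
      _ = 4 * η * ∑ t ∈ Finset.range T, (F t - F (t + 1)) := by
          rw [Finset.mul_sum]
      _ = 4 * η * (F 0 - F T) := by
          congr 1
          have := Finset.sum_range_sub' F T
          simpa using this
      _ ≤ 4 * η * (F 0 - Fstar) := by
          have := hFbdd T
          nlinarith
  constructor
  · exact fun T _ => hsum T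
  · have hsummable : Summable (fun t : ℕ => ‖x (t + 1) - x t‖ ^ 2) := by
      apply summable_of_sum_range_le (fun t => sq_nonneg _) hsum
    have h2 : Filter.Tendsto (fun t : ℕ => ‖x (t + 1) - x t‖ ^ 2)
        Filter.atTop (nhds 0) := hsummable.tendsto_atTop_zero
    have h3 := h2.sqrt
    rw [Real.sqrt_zero] at h3
    convert h3 using 2 with t
    rw [Real.sqrt_sq (norm_nonneg _)]
end

section
/- Let q > 0 and define the quasiconvex PAR Ψ : ℝ → ℝ as follows: for x ∈ ℝ, letting k = ⌊|x|/q⌋ ∈ ℕ, set Ψ(x) = |x| − kq/2 if kq ≤ |x| ≤ (2k+1)q/2, and Ψ(x) = (k+1)q/2 if (2k+1)q/2 ≤ |x| ≤ (k+1)q. Fix λ ≥ q, fix x ∈ ℝ, and let Φ(z) = λΨ(z) + (1/2)(z − x)². Then z = sign(x) · q · max(0, round((|x| − λ/2)/q)) is a global minimizer of Φ over ℝ, where round(·) denotes rounding to the nearest integer. In particular, for λ ≥ q the proximal mapping of λΨ maps every input to a point of the quantization grid qℤ. -/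
/-- The quasiconvex piecewise-affine regularizer with uniformly spaced quantization
values `Q = {0, ±q, ±2q, …}`: with `k = ⌊|x|/q⌋`, it equals `|x| − kq/2` on
`[kq, (2k+1)q/2]` and `(k+1)q/2` on `[(2k+1)q/2, (k+1)q]`. -/
private lemma grid_nearest (q b : ℝ) (hq : 0 < q) (j : ℕ) :
    (((max 0 (round (b / q)) : ℤ) : ℝ) * q - b) ^ 2 ≤ ((j : ℝ) * q - b) ^ 2 := by
  rcases le_or_gt 0 (round (b / q)) with h | h
  · rw [max_eq_right h]
    have h1 : |b / q - (round (b / q) : ℝ)| ≤ |b / q - (j : ℤ)| := round_le (b / q) j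
    have h2 : |b - (round (b / q) : ℝ) * q| ≤ |b - (j : ℝ) * q| := by
      have e1 : b - (round (b / q) : ℝ) * q = (b / q - (round (b / q) : ℝ)) * q := by
        field_simp
      have e2 : b - (j : ℝ) * q = (b / q - (j : ℝ)) * q := by field_simp
      rw [e1, e2, abs_mul, abs_mul]
      exact mul_le_mul_of_nonneg_right (by exact_mod_cast h1) (abs_nonneg q)
    have h3 := pow_le_pow_left₀ (abs_nonneg _) h2 2
    nlinarith [h3, sq_abs (b - (round (b / q) : ℝ) * q), sq_abs (b - (j : ℝ) * q)]
  · rw [max_eq_left h.le]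
    have h1 : |b / q - (round (b / q) : ℝ)| ≤ 1 / 2 := by
      exact_mod_cast abs_sub_round (b / q)
    have h2 : (round (b / q) : ℝ) ≤ -1 := by
      exact_mod_cast Int.le_of_lt_add_one (by exact_mod_cast h)
    have hb : b / q ≤ -1/2 := by
      have := abs_le.mp h1
      linarith [this.2]
    have hbneg : b ≤ 0 := by
      have hbq : b ≤ -1/2 * q := (div_le_iff₀ hq).mp hb
      nlinarith
    have hj : (0:ℝ) ≤ (j : ℝ) * q := by positivity
    push_cast
    nlinarith

noncomputable def quasiconvexPAR (q : ℝ) (x : ℝ) : ℝ :=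
  if |x| ≤ (2 * (⌊|x| / q⌋₊ : ℝ) + 1) * q / 2 then
    |x| - (⌊|x| / q⌋₊ : ℝ) * q / 2
  else
    ((⌊|x| / q⌋₊ : ℝ) + 1) * q / 2

private lemma par_grid (q : ℝ) (hq : 0 < q) (j : ℕ) :
    quasiconvexPAR q ((j : ℝ) * q) = (j : ℝ) * q / 2 := by
  have habs : |(j : ℝ) * q| = (j : ℝ) * q := abs_of_nonneg (by positivity)
  have hfl : ⌊((j : ℝ) * q) / q⌋₊ = j := by
    rw [mul_div_assoc, div_self hq.ne', mul_one, Nat.floor_natCast]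
  unfold quasiconvexPAR
  rw [habs, hfl, if_pos (by nlinarith)]
  ring

private lemma key (q lam : ℝ) (hq : 0 < q) (hlam : q ≤ lam) (a : ℝ)
    (t : ℝ) (ht : 0 ≤ t) :
    lam * ((((max 0 (round ((a - lam / 2) / q)) : ℤ) : ℝ)) * q) / 2
      + (1/2) * ((((max 0 (round ((a - lam / 2) / q)) : ℤ) : ℝ)) * q - a) ^ 2
    ≤ lam * quasiconvexPAR q t + (1/2) * (t - a) ^ 2 := by
  set n : ℝ := (((max 0 (round ((a - lam / 2) / q)) : ℤ) : ℝ)) with hn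
  set k : ℕ := ⌊t / q⌋₊ with hk
  have hk1 : (k : ℝ) * q ≤ t := by
    have := Nat.floor_le (show 0 ≤ t / q by positivity)
    calc (k : ℝ) * q ≤ (t / q) * q := by nlinarith
    _ = t := by field_simp
  have hk2 : t < ((k : ℝ) + 1) * q := by
    have := Nat.lt_floor_add_one (t / q)
    calc t = (t / q) * q := by field_simp
    _ < ((k : ℝ) + 1) * q := by push_cast at this ⊢; nlinarith
  -- value function on the grid
  have hVn : ∀ j : ℕ, lam * (n * q) / 2 + (1/2) * (n * q - a) ^ 2
      ≤ lam * ((j : ℝ) * q) / 2 + (1/2) * ((j : ℝ) * q - a) ^ 2 := by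
    intro j
    have := grid_nearest q (a - lam / 2) hq j
    rw [← hn] at this
    nlinarith
  have hpsi : quasiconvexPAR q t =
      if t ≤ (2 * (k : ℝ) + 1) * q / 2 then t - (k : ℝ) * q / 2
      else ((k : ℝ) + 1) * q / 2 := by
    unfold quasiconvexPAR
    rw [abs_of_nonneg ht, ← hk]
  rw [hpsi]
  have hmain :
      (lam * ((k : ℝ) * q) / 2 + (1/2) * ((k : ℝ) * q - a) ^ 2
        ≤ lam * (if t ≤ (2 * (k : ℝ) + 1) * q / 2 then t - (k : ℝ) * q / 2
            else ((k : ℝ) + 1) * q / 2) + (1/2) * (t - a) ^ 2) ∨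
      (lam * (((k : ℝ) + 1) * q) / 2 + (1/2) * (((k : ℝ) + 1) * q - a) ^ 2
        ≤ lam * (if t ≤ (2 * (k : ℝ) + 1) * q / 2 then t - (k : ℝ) * q / 2
            else ((k : ℝ) + 1) * q / 2) + (1/2) * (t - a) ^ 2) := by
    split_ifs with hc
    · rcases le_or_gt a (lam + (k : ℝ) * q) with h | h
      · left
        nlinarith [mul_nonneg (sub_nonneg.2 hk1)
          (show (0:ℝ) ≤ lam + (t + (k : ℝ) * q) / 2 - a by linarith)]
      · right
        rcases le_or_gt (a - lam) ((2 * (k : ℝ) + 1) * q / 2) with h2 | h2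
        · nlinarith [sq_nonneg (t - a + lam),
            mul_nonneg (show (0:ℝ) ≤ a - ((k:ℝ)+1)*q - (lam - q) by linarith)
              (show (0:ℝ) ≤ (lam - q/2) - (a - ((k:ℝ)+1)*q) by linarith)]
        · nlinarith [mul_nonneg (show (0:ℝ) ≤ (2*(k:ℝ)+1)*q/2 - t by linarith)
              (show (0:ℝ) ≤ a - lam - (t + (2*(k:ℝ)+1)*q/2)/2 by linarith),
            mul_nonneg hq.le (show (0:ℝ) ≤ 2*a - (2*(k:ℝ)+1)*q/2 - ((k:ℝ)+1)*q by linarith)]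
    · push_neg at hc
      rcases le_or_gt (((k : ℝ) + 1) * q) a with h | h
      · right
        nlinarith [mul_nonneg (show (0:ℝ) ≤ ((k:ℝ)+1)*q - t by linarith)
          (show (0:ℝ) ≤ 2*a - t - ((k:ℝ)+1)*q by linarith)]
      · left
        rcases le_or_gt a ((k : ℝ) * q) with h3 | h3
        · nlinarith [mul_nonneg (sub_nonneg.2 hk1)
            (show (0:ℝ) ≤ t + (k:ℝ)*q - 2*a by linarith),
            mul_nonneg hq.le (show (0:ℝ) ≤ lam by linarith)]
        · nlinarith [mul_nonneg (show (0:ℝ) ≤ a - (k:ℝ)*q by linarith)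
            (show (0:ℝ) ≤ ((k:ℝ)+1)*q - a by linarith),
            mul_nonneg hq.le (show (0:ℝ) ≤ lam - q by linarith),
            sq_nonneg (t - a)]
  rcases hmain with hm | hm
  · calc lam * (n * q) / 2 + (1/2) * (n * q - a) ^ 2
        ≤ lam * ((k : ℝ) * q) / 2 + (1/2) * ((k : ℝ) * q - a) ^ 2 := hVn k
    _ ≤ _ := hm
  · calc lam * (n * q) / 2 + (1/2) * (n * q - a) ^ 2
        ≤ lam * (((k+1 : ℕ) : ℝ) * q) / 2 + (1/2) * (((k+1 : ℕ) : ℝ) * q - a) ^ 2 := hVn (k+1)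
    _ = lam * (((k : ℝ) + 1) * q) / 2 + (1/2) * (((k : ℝ) + 1) * q - a) ^ 2 := by push_cast; ring
    _ ≤ _ := hm

private lemma par_abs (q z : ℝ) : quasiconvexPAR q z = quasiconvexPAR q |z| := by
  unfold quasiconvexPAR
  rw [abs_abs]

/-- Closed-form proximal mapping of the quasiconvex PAR in the regime
`λ ≥ q` (Section 3.1): the prox is the hard quantizer
`x ↦ sign(x) · q · max(0, round((|x| − λ/2)/q))`, which lands on the grid `qℤ`. -/
theorem prox_quasiconvex_par_large_lambda
    (q : ℝ) (hq : 0 < q) (lam : ℝ) (hlam : q ≤ lam) (x : ℝ)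
    (Φ : ℝ → ℝ)
    (hΦ : ∀ z, Φ z = lam * quasiconvexPAR q z + (1 / 2) * (z - x) ^ 2) :
    (∀ z : ℝ,
      Φ (Real.sign x * (q * ((max 0 (round ((|x| - lam / 2) / q)) : ℤ) : ℝ))) ≤ Φ z) ∧
    ∃ m : ℤ,
      Real.sign x * (q * ((max 0 (round ((|x| - lam / 2) / q)) : ℤ) : ℝ)) = (m : ℝ) * q := by
  set n : ℤ := max 0 (round ((|x| - lam / 2) / q)) with hn
  have hn0 : (0:ℝ) ≤ (n : ℝ) := by exact_mod_cast le_max_left 0 (round ((|x| - lam / 2) / q))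
  have hzval : quasiconvexPAR q ((n : ℝ) * q) = (n : ℝ) * q / 2 := by
    have hnt : ((n.toNat : ℕ) : ℝ) = (n : ℝ) := by
      exact_mod_cast congrArg Int.cast (Int.toNat_of_nonneg (by exact_mod_cast hn0))
    rw [← hnt, par_grid q hq n.toNat]
  constructor
  · intro z
    -- value at the candidate point
    have hcand : Φ (Real.sign x * (q * (n : ℝ))) =
        lam * ((n : ℝ) * q) / 2 + (1/2) * ((n : ℝ) * q - |x|) ^ 2 := by
      rcases eq_or_ne x 0 with hx | hx
      · subst hx
        have hn00 : n = 0 := by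
          rw [hn]
          have h1 : round ((|(0:ℝ)| - lam / 2) / q) ≤ 0 := by
            have hy : (|(0:ℝ)| - lam / 2) / q ≤ 0 := by
              rw [abs_zero]
              apply div_nonpos_of_nonpos_of_nonneg <;> linarith
            have h2 : round ((|(0:ℝ)| - lam / 2) / q) < 1 := by
              rw [round_eq]
              exact Int.floor_lt.mpr (by push_cast; linarith)
            omega
          omega
        rw [hn00]
        simp only [Real.sign_zero, Int.cast_zero, zero_mul, mul_zero, abs_zero]
        rw [hΦ]
        have h0 : quasiconvexPAR q 0 = 0 := by
          have := par_grid q hq 0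
          simpa using this
        rw [h0]; ring
      · rcases lt_or_gt_of_ne hx with h | h
        · rw [Real.sign_of_neg h, hΦ, par_abs]
          have habsz : |(-1 : ℝ) * (q * (n : ℝ))| = (n : ℝ) * q := by
            rw [abs_mul, abs_neg, abs_one, one_mul, abs_of_nonneg (by positivity)]
            ring
          rw [habsz, hzval, abs_of_neg h]
          ring
        · rw [Real.sign_of_pos h, hΦ, par_abs]
          have habsz : |(1 : ℝ) * (q * (n : ℝ))| = (n : ℝ) * q := by
            rw [abs_mul, abs_one, one_mul, abs_of_nonneg (by positivity)]
            ring
          rw [habsz, hzval, abs_of_pos h]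
          ring
    rw [hcand, hΦ]
    have hzabs : quasiconvexPAR q z = quasiconvexPAR q |z| := par_abs q z
    have hkey := key q lam hq hlam |x| |z| (abs_nonneg z)
    rw [← hn] at hkey
    have hsq2 : (|z| - |x|) ^ 2 ≤ (z - x) ^ 2 := by
      nlinarith [le_abs_self (z * x), abs_mul z x, sq_abs z, sq_abs x]
    rw [hzabs]
    nlinarith [hkey, hsq2]
  · rcases lt_trichotomy x 0 with h | h | h
    · exact ⟨-n, by rw [Real.sign_of_neg h]; push_cast; ring⟩
    · exact ⟨0, by rw [h, Real.sign_zero]; push_cast; ring⟩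
    · exact ⟨n, by rw [Real.sign_of_pos h]; push_cast; ring⟩
end

section
/- Let q > 0 and define Ψ : ℝ → ℝ as follows: for x ∈ ℝ, letting k = ⌊|x|/q⌋ ∈ ℕ, set Ψ(x) = |x| − kq/2 if kq ≤ |x| ≤ (2k+1)q/2, and Ψ(x) = (k+1)q/2 if (2k+1)q/2 ≤ |x| ≤ (k+1)q. Then: (i) |x|/2 ≤ Ψ(x) ≤ |x| for all x ∈ ℝ; (ii) Ψ is Lipschitz with constant 1; and (iii) Ψ is quasiconvex, i.e., Ψ(t·x + (1−t)·y) ≤ max(Ψ(x), Ψ(y)) for all x, y ∈ ℝ and t ∈ [0, 1]. -/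
noncomputable def parF (q u : ℝ) : ℝ :=
  min (u - (⌊u / q⌋₊ : ℝ) * q / 2) (((⌊u / q⌋₊ : ℝ) + 1) * q / 2)

lemma par_eq_F (q x : ℝ) : quasiconvexPAR q x = parF q |x| := by
  unfold quasiconvexPAR parF
  split_ifs with h
  · rw [min_eq_left]; nlinarith
  · push_neg at h; rw [min_eq_right]; nlinarith

lemma floor_mul_le (q u : ℝ) (hq : 0 < q) (hu : 0 ≤ u) :
    (⌊u / q⌋₊ : ℝ) * q ≤ u := by
  have h1 : (⌊u / q⌋₊ : ℝ) ≤ u / q := Nat.floor_le (by positivity)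
  exact (le_div_iff₀ hq).mp h1

lemma lt_floor_succ_mul (q u : ℝ) (hq : 0 < q) :
    u < ((⌊u / q⌋₊ : ℝ) + 1) * q := by
  have h2 : u / q < (⌊u / q⌋₊ : ℝ) + 1 := Nat.lt_floor_add_one _
  exact (div_lt_iff₀ hq).mp h2

lemma parF_mono (q : ℝ) (hq : 0 < q) {u v : ℝ} (hu : 0 ≤ u) (huv : u ≤ v) :
    parF q u ≤ parF q v := by
  have hv : 0 ≤ v := le_trans hu huv
  have hku : (⌊u / q⌋₊ : ℝ) * q ≤ u := floor_mul_le q u hq hu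
  have hkv : (⌊v / q⌋₊ : ℝ) * q ≤ v := floor_mul_le q v hq hv
  have hku' := lt_floor_succ_mul q u hq
  have hkv' := lt_floor_succ_mul q v hq
  have hle : ⌊u / q⌋₊ ≤ ⌊v / q⌋₊ :=
    Nat.floor_le_floor (by gcongr)
  rcases eq_or_lt_of_le hle with heq | hlt
  · unfold parF
    rw [heq]
    exact min_le_min (by linarith) le_rfl
  · have hc : ((⌊u / q⌋₊ : ℝ) + 1) ≤ (⌊v / q⌋₊ : ℝ) := by
      exact_mod_cast hlt
    have h1 : ((⌊u / q⌋₊ : ℝ) + 1) * q ≤ (⌊v / q⌋₊ : ℝ) * q := by nlinarith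
    unfold parF
    refine le_trans (min_le_right _ _) (le_min ?_ ?_) <;> nlinarith

lemma parF_compl_mono (q : ℝ) (hq : 0 < q) {u v : ℝ} (hu : 0 ≤ u) (huv : u ≤ v) :
    u - parF q u ≤ v - parF q v := by
  have hv : 0 ≤ v := le_trans hu huv
  have hku : (⌊u / q⌋₊ : ℝ) * q ≤ u := floor_mul_le q u hq hu
  have hkv : (⌊v / q⌋₊ : ℝ) * q ≤ v := floor_mul_le q v hq hv
  have hku' := lt_floor_succ_mul q u hq
  have hkv' := lt_floor_succ_mul q v hq
  have hle : ⌊u / q⌋₊ ≤ ⌊v / q⌋₊ :=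
    Nat.floor_le_floor (by gcongr)
  unfold parF
  rcases eq_or_lt_of_le hle with heq | hlt
  · rw [heq]
    rcases le_total (u - (⌊v / q⌋₊ : ℝ) * q / 2) (((⌊v / q⌋₊ : ℝ) + 1) * q / 2) with h1 | h1 <;>
      rcases le_total (v - (⌊v / q⌋₊ : ℝ) * q / 2) (((⌊v / q⌋₊ : ℝ) + 1) * q / 2) with h2 | h2
    · rw [min_eq_left h1, min_eq_left h2]; linarith
    · rw [min_eq_left h1, min_eq_right h2]; linarith
    · rw [min_eq_right h1, min_eq_left h2]; linarith
    · rw [min_eq_right h1, min_eq_right h2]; linarith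
  · have hc : ((⌊u / q⌋₊ : ℝ) + 1) ≤ (⌊v / q⌋₊ : ℝ) := by exact_mod_cast hlt
    have h1 : ((⌊u / q⌋₊ : ℝ) + 1) * q ≤ (⌊v / q⌋₊ : ℝ) * q := by nlinarith
    rcases le_total (u - (⌊u / q⌋₊ : ℝ) * q / 2) (((⌊u / q⌋₊ : ℝ) + 1) * q / 2) with h2 | h2 <;>
      rcases le_total (v - (⌊v / q⌋₊ : ℝ) * q / 2) (((⌊v / q⌋₊ : ℝ) + 1) * q / 2) with h3 | h3
    · rw [min_eq_left h2, min_eq_left h3]; nlinarith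
    · rw [min_eq_left h2, min_eq_right h3]; nlinarith
    · rw [min_eq_right h2, min_eq_left h3]; nlinarith
    · rw [min_eq_right h2, min_eq_right h3]; nlinarith

lemma parF_bounds (q : ℝ) (hq : 0 < q) {u : ℝ} (hu : 0 ≤ u) :
    u / 2 ≤ parF q u ∧ parF q u ≤ u := by
  have hku : (⌊u / q⌋₊ : ℝ) * q ≤ u := floor_mul_le q u hq hu
  have hku' := lt_floor_succ_mul q u hq
  have hk0 : (0:ℝ) ≤ (⌊u / q⌋₊ : ℝ) := Nat.cast_nonneg _
  constructor
  · exact le_min (by nlinarith) (by nlinarith)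
  · exact le_trans (min_le_left _ _) (by nlinarith)

/-- Example 4.2: the quasiconvex PAR satisfies the linear growth bound
`|x|/2 ≤ Ψ(x) ≤ |x|`, is 1-Lipschitz, and is quasiconvex. -/
theorem quasiconvex_par_properties (q : ℝ) (hq : 0 < q) :
    (∀ x : ℝ, |x| / 2 ≤ quasiconvexPAR q x ∧ quasiconvexPAR q x ≤ |x|) ∧
    (∀ x y : ℝ, |quasiconvexPAR q x - quasiconvexPAR q y| ≤ |x - y|) ∧
    (∀ x y t : ℝ, 0 ≤ t → t ≤ 1 →
      quasiconvexPAR q (t * x + (1 - t) * y) ≤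
        max (quasiconvexPAR q x) (quasiconvexPAR q y)) := by
  have key : ∀ u v : ℝ, 0 ≤ u → u ≤ v →
      parF q u ≤ parF q v ∧ parF q v - parF q u ≤ v - u := by
    intro u v hu huv
    exact ⟨parF_mono q hq hu huv, by linarith [parF_compl_mono q hq hu huv]⟩
  refine ⟨fun x => ?_, fun x y => ?_, fun x y t ht ht1 => ?_⟩
  · rw [par_eq_F]; exact parF_bounds q hq (abs_nonneg x)
  · rw [par_eq_F, par_eq_F]
    have main : ∀ a b : ℝ, 0 ≤ a → a ≤ b → |parF q b - parF q a| ≤ b - a := by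
      intro a b ha hab
      obtain ⟨h1, h2⟩ := key a b ha hab
      rw [abs_of_nonneg (by linarith)]; exact h2
    rcases le_total |y| |x| with h | h
    · have h1 := main _ _ (abs_nonneg y) h
      have h2 := abs_sub_abs_le_abs_sub x y
      linarith
    · have h1 := main _ _ (abs_nonneg x) h
      have h2 := abs_sub_abs_le_abs_sub y x
      have h3 : |y - x| = |x - y| := abs_sub_comm y x
      rw [abs_sub_comm]
      linarith
  · rw [par_eq_F, par_eq_F, par_eq_F]
    have habs : |t * x + (1 - t) * y| ≤ max |x| |y| := by
      have ht' : (0:ℝ) ≤ 1 - t := by linarith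
      have h0 := abs_add_le (t * x) ((1 - t) * y)
      rw [abs_mul, abs_mul, abs_of_nonneg ht, abs_of_nonneg ht'] at h0
      have h1 := mul_le_mul_of_nonneg_left (le_max_left |x| |y|) ht
      have h2 := mul_le_mul_of_nonneg_left (le_max_right |x| |y|) ht'
      nlinarith
    have hm : parF q |t * x + (1 - t) * y| ≤ parF q (max |x| |y|) :=
      parF_mono q hq (abs_nonneg _) habs
    rcases le_total |x| |y| with h | h
    · rw [max_eq_right h] at hm
      exact le_trans hm (le_max_right _ _)
    · rw [max_eq_left h] at hm
      exact le_trans hm (le_max_left _ _)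
end
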